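/- (Converse implication of Winter's theorem) Let F be an endofunctor and S, T monads on a category C. Let λ⁰ : TS ⇒ ST be a distributive law, with composite monad S∘T := (ST, η^S η^T, μ^S μ^T ∘ Sλ⁰T). Let λ¹ : TF ⇒ FST be a natural transformation satisfying (η*): λ¹ ∘ η^T F = F(η^S η^T) and (μ*): λ¹ ∘ μ^T F = F(μ^S μ^T ∘ Sλ⁰T) ∘ λ¹ST ∘ Tλ¹, and let λ² : SF ⇒ FS be an EM-law (satisfying (η−) and (μ−) with respect to S). Assume the coherence axiom Fμ^S T ∘ FSλ⁰ ∘ λ¹S ∘ Tλ² = Fμ^S T ∘ λ²ST ∘ Sλ¹ ∘ λ⁰F. Then λ̂ := Fμ^S T ∘ λ²ST ∘ Sλ¹ : (ST)F ⇒ F(ST) is an EM-law for the composite monad S∘T, i.e. λ̂ ∘ η^{S∘T} F = Fη^{S∘T} and λ̂ ∘ μ^{S∘T} F = Fμ^{S∘T} ∘ λ̂(ST) ∘ (ST)λ̂, where η^{S∘T} = η^S η^T and μ^{S∘T} = μ^S μ^T ∘ Sλ⁰T. -/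

import Mathlib

open CategoryTheory

universe v u

/-- Raw monad data: an endofunctor together with unit and multiplication components
(the monad laws are not required). -/
structure MonadData (C : Type u) [Category.{v} C] where
  F : C ⥤ C
  unit : ∀ X : C, X ⟶ F.obj X
  mult : ∀ X : C, F.obj (F.obj X) ⟶ F.obj X

variable {C : Type u} [Category.{v} C]

/-- The data underlying a monad. -/
def CategoryTheory.Monad.data (T : Monad C) : MonadData C where
  F := T.toFunctor
  unit X := T.η.app X
  mult X := T.μ.app X

/-- The monad laws (two unitality axioms and associativity) for raw monad data. -/
def MonadData.IsMonad (A : MonadData C) : Prop :=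
  (∀ X : C, A.unit (A.F.obj X) ≫ A.mult X = 𝟙 (A.F.obj X)) ∧
  (∀ X : C, A.F.map (A.unit X) ≫ A.mult X = 𝟙 (A.F.obj X)) ∧
  (∀ X : C, A.F.map (A.mult X) ≫ A.mult X = A.mult (A.F.obj X) ≫ A.mult X)

/-- Axiom (η+) for a law `l : TS ⇒ ST` of the monad `A` (playing `S`) over `B` (playing `T`). -/
def EtaPlus (A B : MonadData C) (l : (A.F ⋙ B.F) ⟶ (B.F ⋙ A.F)) : Prop :=
  ∀ X : C, B.F.map (A.unit X) ≫ l.app X = A.unit (B.F.obj X)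

/-- Axiom (μ+): `λ ∘ Tμ^S = μ^S T ∘ Sλ ∘ λS`. -/
def MuPlus (A B : MonadData C) (l : (A.F ⋙ B.F) ⟶ (B.F ⋙ A.F)) : Prop :=
  ∀ X : C, B.F.map (A.mult X) ≫ l.app X =
    l.app (A.F.obj X) ≫ A.F.map (l.app X) ≫ A.mult (B.F.obj X)

/-- Axiom (η−): `λ ∘ η^T S = Sη^T`. -/
def EtaMinus (A B : MonadData C) (l : (A.F ⋙ B.F) ⟶ (B.F ⋙ A.F)) : Prop :=
  ∀ X : C, B.unit (A.F.obj X) ≫ l.app X = A.F.map (B.unit X)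

/-- Axiom (μ−): `λ ∘ μ^T S = Sμ^T ∘ λT ∘ Tλ`. -/
def MuMinus (A B : MonadData C) (l : (A.F ⋙ B.F) ⟶ (B.F ⋙ A.F)) : Prop :=
  ∀ X : C, B.mult (A.F.obj X) ≫ l.app X =
    B.F.map (l.app X) ≫ l.app (B.F.obj X) ≫ A.F.map (B.mult X)

/-- A weak distributive law satisfies (η+), (μ+) and (μ−). -/
def IsWDL (A B : MonadData C) (l : (A.F ⋙ B.F) ⟶ (B.F ⋙ A.F)) : Prop :=
  EtaPlus A B l ∧ MuPlus A B l ∧ MuMinus A B l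

/-- A distributive law satisfies all four axioms. -/
def IsDL (A B : MonadData C) (l : (A.F ⋙ B.F) ⟶ (B.F ⋙ A.F)) : Prop :=
  EtaPlus A B l ∧ MuPlus A B l ∧ EtaMinus A B l ∧ MuMinus A B l

/-- The natural family `κ := Sμ^T ∘ λT ∘ η^T ST : ST ⇒ ST` associated with a law. -/
def lawKappa (A B : MonadData C) (l : (A.F ⋙ B.F) ⟶ (B.F ⋙ A.F)) (X : C) :
    A.F.obj (B.F.obj X) ⟶ A.F.obj (B.F.obj X) :=
  B.unit (A.F.obj (B.F.obj X)) ≫ l.app (B.F.obj X) ≫ A.F.map (B.mult X)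

/-- The Yang–Baxter equation `σT ∘ Sτ ∘ λR = Rλ ∘ τS ∘ Tσ` for laws
`l : TS ⇒ ST`, `s : SR ⇒ RS`, `t : TR ⇒ RT`. -/
def YangBaxter (Rm Sm Tm : MonadData C)
    (l : (Sm.F ⋙ Tm.F) ⟶ (Tm.F ⋙ Sm.F))
    (s : (Rm.F ⋙ Sm.F) ⟶ (Sm.F ⋙ Rm.F))
    (t : (Rm.F ⋙ Tm.F) ⟶ (Tm.F ⋙ Rm.F)) : Prop :=
  ∀ X : C, l.app (Rm.F.obj X) ≫ Sm.F.map (t.app X) ≫ s.app (Tm.F.obj X) =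
    Tm.F.map (s.app X) ≫ t.app (Sm.F.obj X) ≫ Rm.F.map (l.app X)

/-- The composite monad data `S ∘_λ T = (ST, η^S η^T, μ^S μ^T ∘ SλT)` of a distributive law. -/
def compData (A B : MonadData C) (l : (A.F ⋙ B.F) ⟶ (B.F ⋙ A.F)) : MonadData C where
  F := B.F ⋙ A.F
  unit X := B.unit X ≫ A.unit (B.F.obj X)
  mult X := A.F.map (l.app (B.F.obj X)) ≫ A.F.map (A.F.map (B.mult X)) ≫ A.mult (B.F.obj X)

/-- The weak composite monad data `S •_λ T` built from a splitting `(K, p, i)` of `κ`. -/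
def wcompData (A B : MonadData C) (l : (A.F ⋙ B.F) ⟶ (B.F ⋙ A.F))
    (K : C ⥤ C) (p : (B.F ⋙ A.F) ⟶ K) (i : K ⟶ (B.F ⋙ A.F)) : MonadData C where
  F := K
  unit X := B.unit X ≫ A.unit (B.F.obj X) ≫ p.app X
  mult X := i.app (K.obj X) ≫ A.F.map (B.F.map (i.app X)) ≫ A.F.map (l.app (B.F.obj X)) ≫
    A.F.map (A.F.map (B.mult X)) ≫ A.mult (B.F.obj X) ≫ p.app X

/-- An Eilenberg–Moore distributive law of a functor `F` over (the data of) a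
monad `B`: a natural transformation `χ : BF ⇒ FB` satisfying (η−) and (μ−). -/
def IsEMLaw (B : MonadData C) (F : C ⥤ C) (χ : (F ⋙ B.F) ⟶ (B.F ⋙ F)) : Prop :=
  (∀ X : C, B.unit (F.obj X) ≫ χ.app X = F.map (B.unit X)) ∧
  (∀ X : C, B.mult (F.obj X) ≫ χ.app X =
    B.F.map (χ.app X) ≫ χ.app (B.F.obj X) ≫ F.map (B.mult X))

section Winter

variable {C : Type u} [Category.{v} C] (F : C ⥤ C) (S T : Monad C)

/-- Winter's composite `λ̂ := Fμ^S T ∘ λ²ST ∘ Sλ¹ : (ST)F ⇒ F(ST)`. -/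
def lhat (l1 : (F ⋙ T.toFunctor) ⟶ ((T.toFunctor ⋙ S.toFunctor) ⋙ F))
    (l2 : (F ⋙ S.toFunctor) ⟶ (S.toFunctor ⋙ F)) :
    (F ⋙ (T.toFunctor ⋙ S.toFunctor)) ⟶ ((T.toFunctor ⋙ S.toFunctor) ⋙ F) :=
  Functor.whiskerRight l1 S.toFunctor ≫ Functor.whiskerLeft (T.toFunctor ⋙ S.toFunctor) l2 ≫
    Functor.whiskerRight (Functor.whiskerLeft T.toFunctor S.μ) F

/-- converse implication of Winter's theorem. Let `λ⁰ : TS ⇒ ST`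
be a distributive law with composite monad `S∘T`, let `λ¹ : TF ⇒ FST` satisfy the
axioms (η*) and (μ*), and let `λ² : SF ⇒ FS` be an EM-law. If the coherence axiom
`Fμ^S T ∘ FSλ⁰ ∘ λ¹S ∘ Tλ² = Fμ^S T ∘ λ²ST ∘ Sλ¹ ∘ λ⁰F` holds, then
`λ̂ := Fμ^S T ∘ λ²ST ∘ Sλ¹` is an EM-law for the composite monad `S∘T`. -/
theorem winter_converse
    (l0 : (S.toFunctor ⋙ T.toFunctor) ⟶ (T.toFunctor ⋙ S.toFunctor))
    (l1 : (F ⋙ T.toFunctor) ⟶ ((T.toFunctor ⋙ S.toFunctor) ⋙ F))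
    (l2 : (F ⋙ S.toFunctor) ⟶ (S.toFunctor ⋙ F))
    (hl0 : IsDL S.data T.data l0)
    (hl1η : ∀ X : C, T.η.app (F.obj X) ≫ l1.app X =
      F.map ((compData S.data T.data l0).unit X))
    (hl1μ : ∀ X : C, T.μ.app (F.obj X) ≫ l1.app X =
      T.map (l1.app X) ≫ l1.app (S.obj (T.obj X)) ≫
        F.map ((compData S.data T.data l0).mult X))
    (hl2 : IsEMLaw S.data F l2)
    (coh : ∀ X : C,
      T.map (l2.app X) ≫ l1.app (S.obj X) ≫ F.map (S.map (l0.app X)) ≫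
          F.map (S.μ.app (T.obj X)) =
      l0.app (F.obj X) ≫ S.map (l1.app X) ≫ l2.app (S.obj (T.obj X)) ≫
          F.map (S.μ.app (T.obj X))) :
    IsEMLaw (compData S.data T.data l0) F (lhat F S T l1 l2) := by
  obtain ⟨h2η, h2μ⟩ := hl2
  obtain ⟨-, h0μ, -, -⟩ := hl0
  simp only [IsEMLaw, MuPlus, compData, Monad.data, Functor.comp_obj] at h2η h2μ h0μ hl1μ ⊢
  -- component-level naturality helpers
  have nμ : ∀ {A B : C} (f : A ⟶ B), S.map (S.map f) ≫ S.μ.app B = S.μ.app A ≫ S.map f :=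
    fun f => by simpa using S.μ.naturality f
  have nc2 : ∀ {A B : C} (f : A ⟶ B),
      S.map (F.map f) ≫ l2.app B = l2.app A ≫ F.map (S.map f) :=
    fun f => by simpa using l2.naturality f
  have nb : ∀ {A B : C} (f : A ⟶ B),
      T.map (F.map f) ≫ l1.app B = l1.app A ≫ F.map (S.map (T.map f)) :=
    fun f => by simpa using l1.naturality f
  have na : ∀ {A B : C} (f : A ⟶ B),
      T.map (S.map f) ≫ l0.app B = l0.app A ≫ S.map (T.map f) :=
    fun f => by simpa using l0.naturality f
  constructor
  · intro X
    simp only [lhat, NatTrans.comp_app, Functor.whiskerRight_app, Functor.whiskerLeft_app, Functor.comp_obj,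
      Functor.comp_map, Category.assoc]
    have e1 : S.η.app (T.obj (F.obj X)) ≫ S.map (l1.app X) =
        l1.app X ≫ S.η.app (F.obj (S.obj (T.obj X))) := by simpa using (S.η.naturality (l1.app X)).symm
    rw [reassoc_of% e1, reassoc_of% (h2η (S.obj (T.obj X))), ← F.map_comp,
      S.left_unit]
    have h9 := hl1η X
    simp only [compData, Monad.data] at h9
    dsimp only [Functor.id_obj]
    rw [CategoryTheory.Functor.map_id]
    rw [Category.comp_id]
    rw [h9]
  · intro X
    simp only [lhat, NatTrans.comp_app, Functor.whiskerRight_app, Functor.whiskerLeft_app, Functor.comp_obj,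
      Functor.comp_map, Category.assoc]
    set g : S.obj (T.obj (S.obj (T.obj X))) ⟶ S.obj (T.obj X) :=
      S.map (l0.app (T.obj X)) ≫ S.map (S.map (T.μ.app X)) ≫ S.μ.app (T.obj X) with hg
    have dagger : S.map g ≫ S.μ.app (T.obj X) =
        S.μ.app (T.obj (S.obj (T.obj X))) ≫ g := by
      rw [hg]
      simp only [Functor.map_comp, Category.assoc]
      rw [S.assoc (T.obj X), reassoc_of% (nμ (S.map (T.μ.app X))),
        reassoc_of% (nμ (l0.app (T.obj X)))]
    have ddagger : S.map (S.map g) ≫ S.μ.app (S.obj (T.obj X)) ≫ S.μ.app (T.obj X) =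
        S.map (S.μ.app (T.obj (S.obj (T.obj X)))) ≫ S.map g ≫ S.μ.app (T.obj X) := by
      rw [reassoc_of% (nμ g), dagger, ← reassoc_of% (S.assoc (T.obj (S.obj (T.obj X))))]
    -- Step L1: pull μ past S(l1) by μ-naturality
    rw [← reassoc_of% (nμ (l1.app X))]
    -- Step L2: EM-law (μ−) for l2 at S T X
    rw [reassoc_of% (h2μ (S.obj (T.obj X)))]
    -- Step L3: (μ*) for l1, S∘S-whiskered
    have hSSν : S.map (S.map (T.μ.app (F.obj X))) ≫ S.map (S.map (l1.app X)) =
        S.map (S.map (T.map (l1.app X))) ≫ S.map (S.map (l1.app (S.obj (T.obj X)))) ≫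
          S.map (S.map (F.map g)) := by
      rw [hg]
      simp only [← Functor.map_comp]
      rw [hl1μ X]
    rw [reassoc_of% hSSν]
    -- Step L4/L5: naturality of l2 along g and S g
    have hc1 : S.map (S.map (F.map g)) ≫ S.map (l2.app (S.obj (T.obj X))) =
        S.map (l2.app (S.obj (T.obj (S.obj (T.obj X))))) ≫ S.map (F.map (S.map g)) := by
      rw [← Functor.map_comp, ← Functor.map_comp, nc2 g]
    rw [reassoc_of% hc1, reassoc_of% (nc2 (S.map g))]
    -- Step L6: tail rearrangement via ddagger
    have htail : F.map (S.map (S.map g)) ≫ F.map (S.μ.app (S.obj (T.obj X))) ≫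
          F.map (S.μ.app (T.obj X)) =
        F.map (S.map (S.μ.app (T.obj (S.obj (T.obj X))))) ≫ F.map (S.map g) ≫
          F.map (S.μ.app (T.obj X)) := by
      simp only [← Functor.map_comp]
      rw [ddagger]
    rw [htail]
    -- Step L7: pull F(S μ) back through l2
    rw [← reassoc_of% (nc2 (S.μ.app (T.obj (S.obj (T.obj X)))))]
    -- Step L8: naturality of l0 along l1
    have na1 := na (l1.app X)
    dsimp only [Functor.comp_obj] at na1
    have hna : S.map (l0.app (T.obj (F.obj X))) ≫ S.map (S.map (T.map (l1.app X))) =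
        S.map (T.map (S.map (l1.app X))) ≫ S.map (l0.app (F.obj (S.obj (T.obj X)))) := by
      rw [← Functor.map_comp, ← Functor.map_comp, ← na1]
    rw [reassoc_of% hna]
    -- Step L9: the coherence axiom, S-whiskered
    have hcoh : S.map (l0.app (F.obj (S.obj (T.obj X)))) ≫
          S.map (S.map (l1.app (S.obj (T.obj X)))) ≫
          S.map (l2.app (S.obj (T.obj (S.obj (T.obj X))))) ≫
          S.map (F.map (S.μ.app (T.obj (S.obj (T.obj X))))) =
        S.map (T.map (l2.app (S.obj (T.obj X)))) ≫
          S.map (l1.app (S.obj (S.obj (T.obj X)))) ≫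
          S.map (F.map (S.map (l0.app (S.obj (T.obj X))))) ≫
          S.map (F.map (S.μ.app (T.obj (S.obj (T.obj X))))) := by
      simp only [← Functor.map_comp]
      rw [← coh (S.obj (T.obj X))]
      simp only [Functor.map_comp]
    rw [reassoc_of% hcoh]
    -- Step L10: push l2 forward again by naturality
    rw [reassoc_of% (nc2 (S.μ.app (T.obj (S.obj (T.obj X)))))]
    rw [reassoc_of% (nc2 (S.map (l0.app (S.obj (T.obj X)))))]
    -- Now work on the right-hand side: split the whiskered composite
    simp only [Functor.map_comp, Category.assoc]
    -- Step R1: naturality of l1 along μ^S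
    have hnb : S.map (T.map (F.map (S.μ.app (T.obj X)))) ≫ S.map (l1.app (S.obj (T.obj X))) =
        S.map (l1.app (S.obj (S.obj (T.obj X)))) ≫
          S.map (F.map (S.map (T.map (S.μ.app (T.obj X))))) := by
      have nb1 := nb (S.μ.app (T.obj X))
      dsimp only [Functor.comp_obj] at nb1
      rw [← Functor.map_comp, ← Functor.map_comp, nb1]
    rw [reassoc_of% hnb]
    -- Step R2: naturality of l2
    rw [reassoc_of% (nc2 (S.map (T.map (S.μ.app (T.obj X)))))]
    -- Step R3: the remaining identity between the F-image tails
    have hS0 : S.map (T.map (S.μ.app (T.obj X))) ≫ S.map (l0.app (T.obj X)) =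
        S.map (l0.app (S.obj (T.obj X))) ≫ S.map (S.map (l0.app (T.obj X))) ≫
          S.map (S.μ.app (T.obj (T.obj X))) := by
      simp only [← Functor.map_comp]
      rw [h0μ]
    have hcμν : S.map (S.μ.app (T.obj (T.obj X))) ≫ S.map (S.map (T.μ.app X)) =
        S.map (S.map (S.map (T.μ.app X))) ≫ S.map (S.μ.app (T.obj X)) := by
      have nμ1 := nμ (T.μ.app X)
      dsimp only [Functor.comp_obj] at nμ1
      simp only [← Functor.map_comp]
      rw [← nμ1]
    have R3sub : S.map (l0.app (S.obj (T.obj X))) ≫ S.μ.app (T.obj (S.obj (T.obj X))) ≫ g =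
        S.map (T.map (S.μ.app (T.obj X))) ≫ g := by
      rw [hg]
      rw [← reassoc_of% (nμ (l0.app (T.obj X)))]
      rw [← reassoc_of% (nμ (S.map (T.μ.app X)))]
      rw [reassoc_of% hS0, reassoc_of% hcμν, S.assoc (T.obj X)]
    have R3eq : S.map (S.map (l0.app (S.obj (T.obj X)))) ≫
          S.map (S.μ.app (T.obj (S.obj (T.obj X)))) ≫ S.map g ≫ S.μ.app (T.obj X) =
        S.map (S.map (T.map (S.μ.app (T.obj X)))) ≫ S.μ.app (T.obj (S.obj (T.obj X))) ≫ g := by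
      rw [dagger]
      rw [reassoc_of% (S.assoc (T.obj (S.obj (T.obj X))))]
      rw [reassoc_of% (nμ (l0.app (S.obj (T.obj X))))]
      rw [reassoc_of% (nμ (T.map (S.μ.app (T.obj X))))]
      rw [R3sub]
    have hR3F : F.map (S.map (S.map (l0.app (S.obj (T.obj X))))) ≫
          F.map (S.map (S.μ.app (T.obj (S.obj (T.obj X))))) ≫ F.map (S.map g) ≫
          F.map (S.μ.app (T.obj X)) =
        F.map (S.map (S.map (T.map (S.μ.app (T.obj X))))) ≫
          F.map (S.μ.app (T.obj (S.obj (T.obj X)))) ≫ F.map g := by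
      simp only [← Functor.map_comp]
      rw [R3eq]
    rw [hR3F]

end Winter
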